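/- Let d, n ∈ ℕ, let m ∈ ℕ with m ≥ 1, and let x₁, …, x_n ∈ [0,1]^d. Then there exist monotone functions f₋, f₊ : [0,1]^d → [0,1] with f₋ ≤ f₊ pointwise, f₋(x_i) = f₊(x_i) for all i = 1, …, n, and ∫_{[0,1]^d} (f₊ − f₋) dλ^d ≥ (1 − n · m^{−d}) / (d(m−1)+1). -/

import Mathlib

open MeasureTheory

noncomputable def cIdx (m : ℕ) (t : ℝ) : ℕ := min (⌊(m:ℝ)*t⌋.toNat) (m-1)

lemma cIdx_mono (m : ℕ) : Monotone (cIdx m) := fun a b hab => by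
  unfold cIdx
  exact min_le_min (Int.toNat_le_toNat (Int.floor_le_floor
    (mul_le_mul_of_nonneg_left hab (by positivity)))) le_rfl

lemma cIdx_le (m : ℕ) (t : ℝ) : cIdx m t ≤ m - 1 := min_le_right _ _

lemma cIdx_measurable (m : ℕ) : Measurable (cIdx m) := by
  unfold cIdx
  have h1 : Measurable fun t : ℝ => ⌊(m:ℝ)*t⌋ :=
    Int.measurable_floor.comp (measurable_id.const_mul ((m:ℝ)))
  exact (measurable_from_top (f := fun z : ℤ => min z.toNat (m-1))).comp h1

lemma cIdx_mem (m : ℕ) (hm : 1 ≤ m) {t : ℝ} (h0 : 0 ≤ t) (h1 : t ≤ 1) :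
    (cIdx m t : ℝ) ≤ m * t ∧ m * t ≤ cIdx m t + 1 := by
  have hmt : (0:ℝ) ≤ m * t := by positivity
  have hfl : (0:ℤ) ≤ ⌊(m:ℝ)*t⌋ := Int.le_floor.2 (by exact_mod_cast hmt)
  constructor
  · calc (cIdx m t : ℝ) ≤ (⌊(m:ℝ)*t⌋.toNat : ℝ) := by
          exact_mod_cast (min_le_left _ _ : cIdx m t ≤ _)
      _ = (⌊(m:ℝ)*t⌋ : ℝ) := by exact_mod_cast Int.toNat_of_nonneg hfl
      _ ≤ m * t := Int.floor_le _
  · rcases le_or_gt (⌊(m:ℝ)*t⌋.toNat) (m-1) with h | h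
    · have heq : cIdx m t = ⌊(m:ℝ)*t⌋.toNat := min_eq_left h
      rw [heq]
      have : ((⌊(m:ℝ)*t⌋.toNat : ℝ)) = (⌊(m:ℝ)*t⌋ : ℝ) := by
        exact_mod_cast Int.toNat_of_nonneg hfl
      rw [this]
      exact (Int.lt_floor_add_one _).le
    · have heq : cIdx m t = m - 1 := min_eq_right h.le
      rw [heq]
      have hc : ((m - 1 : ℕ) : ℝ) = (m : ℝ) - 1 := by
        push_cast [Nat.cast_sub hm]; ring
      rw [hc]
      have : (m:ℝ) * t ≤ m := by
        nlinarith [(Nat.one_le_cast (α := ℝ)).2 hm]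
      linarith

theorem stmt12 (d n m : ℕ) (hd : 1 ≤ d) (hn : 1 ≤ n) (hm : 1 ≤ m)
    (x : Fin n → Fin d → ℝ) (hx : ∀ i, x i ∈ Set.Icc (0 : Fin d → ℝ) 1) :
    ∃ fm fp : (Fin d → ℝ) → ℝ,
      (∀ y ∈ Set.Icc (0 : Fin d → ℝ) 1, fm y ∈ Set.Icc (0 : ℝ) 1) ∧
      (∀ y ∈ Set.Icc (0 : Fin d → ℝ) 1, fp y ∈ Set.Icc (0 : ℝ) 1) ∧
      (∀ y ∈ Set.Icc (0 : Fin d → ℝ) 1, ∀ z ∈ Set.Icc (0 : Fin d → ℝ) 1,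
        y ≤ z → fm y ≤ fm z) ∧
      (∀ y ∈ Set.Icc (0 : Fin d → ℝ) 1, ∀ z ∈ Set.Icc (0 : Fin d → ℝ) 1,
        y ≤ z → fp y ≤ fp z) ∧
      (∀ y ∈ Set.Icc (0 : Fin d → ℝ) 1, fm y ≤ fp y) ∧
      (∀ i, fm (x i) = fp (x i)) ∧
      (1 - (n : ℝ) / m ^ d) / ((d : ℝ) * ((m : ℝ) - 1) + 1) ≤
        ∫ y in Set.Icc (0 : Fin d → ℝ) 1, (fp y - fm y) := by
  classical
  set D : ℕ := d*(m-1)+1 with hDdef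
  have hDR : (0:ℝ) < D := by positivity
  set ℓ : (Fin d → ℝ) → ℕ := fun y => ∑ j, cIdx m (y j) with hldef
  set S : Set (Fin d → ℝ) := {y | ∃ i, ∀ j, cIdx m (y j) = cIdx m (x i j)} with hSdef
  have hℓle : ∀ y, (ℓ y : ℝ) + 1 ≤ D := by
    intro y
    have : ℓ y ≤ d * (m-1) := by
      calc ℓ y ≤ ∑ _j : Fin d, (m-1) := Finset.sum_le_sum (fun j _ => cIdx_le m (y j))
        _ = d * (m-1) := by simp [Finset.sum_const, Finset.card_univ]
    have : ℓ y + 1 ≤ D := by omega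
    exact_mod_cast this
  have hℓmono : ∀ y z : Fin d → ℝ, y ≤ z → ℓ y ≤ ℓ z := by
    intro y z hyz
    exact Finset.sum_le_sum (fun j _ => cIdx_mono m (hyz j))
  refine ⟨fun y => (ℓ y : ℝ)/D,
    fun y => ((ℓ y : ℝ) + (if y ∈ S then 0 else 1))/D, ?_, ?_, ?_, ?_, ?_, ?_, ?_⟩
  · intro y _
    constructor
    · positivity
    · rw [div_le_one hDR]
      have := hℓle y; linarith
  · intro y _
    constructor
    · have : (0:ℝ) ≤ (ℓ y : ℝ) + (if y ∈ S then 0 else 1) := by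
        split <;> positivity
      positivity
    · rw [div_le_one hDR]
      have := hℓle y
      split <;> linarith
  · intro y _ z _ hyz
    show (ℓ y : ℝ)/D ≤ (ℓ z : ℝ)/D
    gcongr
    exact_mod_cast hℓmono y z hyz
  · -- monotone fp
    intro y _ z _ hyz
    have hsum := hℓmono y z hyz
    show ((ℓ y : ℝ) + (if y ∈ S then 0 else 1))/D ≤ ((ℓ z : ℝ) + (if z ∈ S then 0 else 1))/D
    rcases eq_or_lt_of_le hsum with heq | hlt
    · have hall : ∀ j, cIdx m (y j) = cIdx m (z j) := by
        have := (Finset.sum_eq_sum_iff_of_le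
          (fun j (_ : j ∈ Finset.univ) => cIdx_mono m (hyz j))).1 heq
        exact fun j => this j (Finset.mem_univ j)
      have hiff : y ∈ S ↔ z ∈ S := by
        constructor
        · rintro ⟨i, hi⟩; exact ⟨i, fun j => (hall j).symm.trans (hi j)⟩
        · rintro ⟨i, hi⟩; exact ⟨i, fun j => (hall j).trans (hi j)⟩
      have : (ℓ y : ℝ) = ℓ z := by exact_mod_cast heq
      rw [this, if_congr hiff rfl rfl]
    · have h1 : (ℓ y : ℝ) + 1 ≤ (ℓ z : ℝ) := by exact_mod_cast hlt
      have h2 : (ℓ y : ℝ) + (if y ∈ S then 0 else 1) ≤ (ℓ z : ℝ) + (if z ∈ S then 0 else 1) := by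
        split <;> split <;> linarith
      exact div_le_div_of_nonneg_right h2 hDR.le
  · -- fm ≤ fp
    intro y _
    show (ℓ y : ℝ)/D ≤ ((ℓ y : ℝ) + (if y ∈ S then 0 else 1))/D
    gcongr
    split <;> linarith
  · -- equal at samples
    intro i
    have : x i ∈ S := ⟨i, fun j => rfl⟩
    simp [this]
  · -- integral bound
    have hmR : (0:ℝ) < m := by exact_mod_cast hm
    have hSmeas : MeasurableSet S := by
      have hrw : S = ⋃ i, ⋂ j, (fun y : Fin d → ℝ => y j) ⁻¹' (cIdx m ⁻¹' {cIdx m (x i j)}) := by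
        ext y
        simp [hSdef, Set.mem_iUnion, Set.mem_iInter, Set.mem_preimage]
      rw [hrw]
      exact MeasurableSet.iUnion fun i => MeasurableSet.iInter fun j =>
        ((cIdx_measurable m).comp (measurable_pi_apply j)) (measurableSet_singleton _)
    have hIccMeas : MeasurableSet (Set.Icc (0 : Fin d → ℝ) 1) := measurableSet_Icc
    have hIccvol : volume (Set.Icc (0 : Fin d → ℝ) 1) = 1 := by
      rw [Real.volume_Icc_pi]; simp
    have hfun : ∀ y : Fin d → ℝ, ((ℓ y : ℝ) + (if y ∈ S then 0 else 1))/D - (ℓ y : ℝ)/D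
        = Sᶜ.indicator (fun _ => (D:ℝ)⁻¹) y := by
      intro y
      by_cases h : y ∈ S
      · simp [Set.indicator, h]
      · simp only [Set.indicator, Set.mem_compl_iff, h, if_false, if_true, not_false_iff]
        field_simp
        ring
    have hint : (∫ y in Set.Icc (0 : Fin d → ℝ) 1,
          (((ℓ y : ℝ) + (if y ∈ S then 0 else 1))/D - (ℓ y : ℝ)/D))
        = (volume (Set.Icc (0:Fin d → ℝ) 1 ∩ Sᶜ)).toReal * (D:ℝ)⁻¹ := by
      simp_rw [hfun]
      rw [setIntegral_indicator hSmeas.compl, setIntegral_const, smul_eq_mul]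
      rfl
    have hv : volume (S ∩ Set.Icc (0:Fin d → ℝ) 1) ≤ ENNReal.ofReal ((n:ℝ) / m ^ d) := by
      have hsub : S ∩ Set.Icc (0:Fin d → ℝ) 1 ⊆
          ⋃ i, Set.Icc (fun j => (cIdx m (x i j) : ℝ)/m)
            (fun j => ((cIdx m (x i j) : ℝ)+1)/m) := by
        rintro y ⟨⟨i, hi⟩, hy⟩
        refine Set.mem_iUnion.2 ⟨i, ?_, ?_⟩
        · intro j
          have h2 := (cIdx_mem m hm (hy.1 j) (hy.2 j)).1
          show (cIdx m (x i j) : ℝ)/m ≤ y j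
          rw [← hi j, div_le_iff₀ hmR]
          linarith
        · intro j
          have h2 := (cIdx_mem m hm (hy.1 j) (hy.2 j)).2
          show y j ≤ ((cIdx m (x i j) : ℝ)+1)/m
          rw [← hi j, le_div_iff₀ hmR]
          linarith
      calc volume (S ∩ Set.Icc (0:Fin d → ℝ) 1)
          ≤ volume (⋃ i, Set.Icc (fun j => (cIdx m (x i j) : ℝ)/m)
            (fun j => ((cIdx m (x i j) : ℝ)+1)/m)) := measure_mono hsub
        _ ≤ ∑' i, volume (Set.Icc (fun j => (cIdx m (x i j) : ℝ)/m)
            (fun j => ((cIdx m (x i j) : ℝ)+1)/m)) := measure_iUnion_le _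
        _ = ∑' _i : Fin n, ENNReal.ofReal (1/(m:ℝ)) ^ d := by
            congr 1; funext i
            rw [Real.volume_Icc_pi]
            have : ∀ j : Fin d, ((cIdx m (x i j) : ℝ)+1)/m - (cIdx m (x i j) : ℝ)/m
                = 1/(m:ℝ) := by
              intro j; rw [div_sub_div_same]; ring_nf
            simp_rw [this]
            simp [Finset.prod_const, Finset.card_univ]
        _ = (n : ENNReal) * ENNReal.ofReal (1/(m:ℝ)) ^ d := by
            rw [tsum_fintype]
            simp [Finset.sum_const, Finset.card_univ, nsmul_eq_mul]
        _ = ENNReal.ofReal ((n:ℝ) / m ^ d) := by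
            rw [← ENNReal.ofReal_pow (by positivity), ← ENNReal.ofReal_natCast n,
              ← ENNReal.ofReal_mul (by positivity)]
            congr 1
            rw [one_div, inv_pow]
            field_simp
    have hv1 : volume (S ∩ Set.Icc (0:Fin d → ℝ) 1) ≤ 1 := by
      rw [← hIccvol]; exact measure_mono Set.inter_subset_right
    have hdiff : volume (Set.Icc (0:Fin d → ℝ) 1 ∩ Sᶜ)
        = 1 - volume (S ∩ Set.Icc (0:Fin d → ℝ) 1) := by
      have hset : Set.Icc (0:Fin d → ℝ) 1 ∩ Sᶜ
          = Set.Icc (0:Fin d → ℝ) 1 \ (S ∩ Set.Icc (0:Fin d → ℝ) 1) := by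
        ext y
        simp only [Set.mem_inter_iff, Set.mem_compl_iff, Set.mem_diff]
        tauto
      rw [hset, measure_diff Set.inter_subset_right
        ((hSmeas.inter hIccMeas).nullMeasurableSet)
        (hv1.trans_lt ENNReal.one_lt_top).ne, hIccvol]
    have htr : (volume (Set.Icc (0:Fin d → ℝ) 1 ∩ Sᶜ)).toReal
        = 1 - (volume (S ∩ Set.Icc (0:Fin d → ℝ) 1)).toReal := by
      rw [hdiff, ENNReal.toReal_sub_of_le hv1 ENNReal.one_ne_top, ENNReal.toReal_one]
    have hvr : (volume (S ∩ Set.Icc (0:Fin d → ℝ) 1)).toReal ≤ (n:ℝ) / m ^ d :=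
      ENNReal.toReal_le_of_le_ofReal (by positivity) hv
    have hDcast : (D:ℝ) = (d:ℝ)*((m:ℝ)-1)+1 := by
      rw [hDdef]; push_cast [Nat.cast_sub hm]; ring
    show (1 - (n : ℝ) / m ^ d) / ((d : ℝ) * ((m : ℝ) - 1) + 1) ≤
        ∫ y in Set.Icc (0 : Fin d → ℝ) 1,
          (((ℓ y : ℝ) + (if y ∈ S then 0 else 1))/D - (ℓ y : ℝ)/D)
    rw [hint, htr, ← hDcast, div_eq_mul_inv]
    apply mul_le_mul_of_nonneg_right (by linarith) (inv_nonneg.2 hDR.le)
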